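/- Let D ⊆ ℝ², let p be an interior point of D, and let f : D → ℝ have continuous partial derivatives of first and second order in an open neighborhood of p. Assume Δf(p) ≠ 0, where Δf(p) := f_xx(p)·f_yy(p) − f_xy(p)². Then f has a saddle point at p if and only if ∇f(p) = 0 and Δf(p) < 0. -/

import Mathlib

open Set Filter Topology

/-- `γ : [a, b] → D` is a regular path in `D`: it is continuous on `[a, b]`, maps `[a, b]`
into `D`, is differentiable on `(a, b)`, and its derivative is nonvanishing on `(a, b)`. -/
def IsRegularPath (D : Set (ℝ × ℝ)) (γ : ℝ → ℝ × ℝ) (a b : ℝ) : Prop :=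
  a < b ∧ ContinuousOn γ (Set.Icc a b) ∧ Set.MapsTo γ (Set.Icc a b) D ∧
    ∀ t ∈ Set.Ioo a b, DifferentiableAt ℝ γ t ∧ deriv γ t ≠ 0

/-- A function of one real variable has a strict local maximum at `t`. -/
def IsStrictLocalMax (g : ℝ → ℝ) (t : ℝ) : Prop :=
  ∀ᶠ s in 𝓝[≠] t, g s < g t

/-- A function of one real variable has a strict local minimum at `t`. -/
def IsStrictLocalMin (g : ℝ → ℝ) (t : ℝ) : Prop :=
  ∀ᶠ s in 𝓝[≠] t, g t < g s

/-- `f` has a saddle point at `p`: there are regular paths `γ₁, γ₂` in `D` passing through `p`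
and intersecting transversally at `p` (their tangent vectors at `p` are not multiples of each
other) such that `f` has a local maximum at `p` along `γ₁` and a local minimum at `p`
along `γ₂`. -/
def HasSaddleAt (D : Set (ℝ × ℝ)) (f : ℝ × ℝ → ℝ) (p : ℝ × ℝ) : Prop :=
  ∃ (a₁ b₁ a₂ b₂ t₁ t₂ : ℝ) (γ₁ γ₂ : ℝ → ℝ × ℝ),
    IsRegularPath D γ₁ a₁ b₁ ∧ IsRegularPath D γ₂ a₂ b₂ ∧
    t₁ ∈ Set.Ioo a₁ b₁ ∧ t₂ ∈ Set.Ioo a₂ b₂ ∧ γ₁ t₁ = p ∧ γ₂ t₂ = p ∧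
    (∀ c : ℝ, deriv γ₁ t₁ ≠ c • deriv γ₂ t₂) ∧
    (∀ c : ℝ, deriv γ₂ t₂ ≠ c • deriv γ₁ t₁) ∧
    IsLocalMax (f ∘ γ₁) t₁ ∧ IsLocalMin (f ∘ γ₂) t₂

/-- `f` has a strict saddle point at `p`: as for a saddle point, but with a strict local
maximum along `γ₁` and a strict local minimum along `γ₂`. -/
def HasStrictSaddleAt (D : Set (ℝ × ℝ)) (f : ℝ × ℝ → ℝ) (p : ℝ × ℝ) : Prop :=
  ∃ (a₁ b₁ a₂ b₂ t₁ t₂ : ℝ) (γ₁ γ₂ : ℝ → ℝ × ℝ),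
    IsRegularPath D γ₁ a₁ b₁ ∧ IsRegularPath D γ₂ a₂ b₂ ∧
    t₁ ∈ Set.Ioo a₁ b₁ ∧ t₂ ∈ Set.Ioo a₂ b₂ ∧ γ₁ t₁ = p ∧ γ₂ t₂ = p ∧
    (∀ c : ℝ, deriv γ₁ t₁ ≠ c • deriv γ₂ t₂) ∧
    (∀ c : ℝ, deriv γ₂ t₂ ≠ c • deriv γ₁ t₁) ∧
    IsStrictLocalMax (f ∘ γ₁) t₁ ∧ IsStrictLocalMin (f ∘ γ₂) t₂

/-- The second partial derivative `f_xx` at `p`. -/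
noncomputable def fxx (f : ℝ × ℝ → ℝ) (p : ℝ × ℝ) : ℝ :=
  fderiv ℝ (fun q => fderiv ℝ f q (1, 0)) p (1, 0)

/-- The mixed second partial derivative `f_xy` at `p`. -/
noncomputable def fxy (f : ℝ × ℝ → ℝ) (p : ℝ × ℝ) : ℝ :=
  fderiv ℝ (fun q => fderiv ℝ f q (1, 0)) p (0, 1)

/-- The second partial derivative `f_yy` at `p`. -/
noncomputable def fyy (f : ℝ × ℝ → ℝ) (p : ℝ × ℝ) : ℝ :=
  fderiv ℝ (fun q => fderiv ℝ f q (0, 1)) p (0, 1)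

/-- The Hessian form `Q_p(h) = f_xx(p) h₁² + 2 f_xy(p) h₁ h₂ + f_yy(p) h₂²` of `f` at `p`. -/
noncomputable def hessianForm (f : ℝ × ℝ → ℝ) (p h : ℝ × ℝ) : ℝ :=
  fxx f p * h.1 ^ 2 + 2 * fxy f p * h.1 * h.2 + fyy f p * h.2 ^ 2

lemma key1d_max {g g' g'' : ℝ → ℝ} {δ : ℝ} (hδ : 0 < δ)
    (hg : ∀ t ∈ Icc (-δ) δ, HasDerivAt g (g' t) t)
    (hg' : ∀ t ∈ Icc (-δ) δ, HasDerivAt g' (g'' t) t)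
    (h0 : g' 0 = 0) (hneg : ∀ t ∈ Icc (-δ) δ, g'' t < 0) :
    ∀ s ∈ Icc (-δ) δ, s ≠ 0 → g s < g 0 := by
  intro s hs hs0
  rcases hs0.lt_or_gt with h | h
  · -- s < 0
    have hsub : Icc s 0 ⊆ Icc (-δ) δ := Icc_subset_Icc hs.1 hδ.le
    obtain ⟨θ, hθ, hθeq⟩ := exists_hasDerivAt_eq_slope g g' h
      (fun t ht => (hg t (hsub ht)).continuousAt.continuousWithinAt)
      (fun t ht => hg t (hsub (Ioo_subset_Icc_self ht)))
    have hθmem : θ ∈ Icc (-δ) δ := hsub (Ioo_subset_Icc_self hθ)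
    have hsub2 : Icc θ 0 ⊆ Icc (-δ) δ := Icc_subset_Icc hθmem.1 hδ.le
    obtain ⟨θ₂, hθ₂, hθ₂eq⟩ := exists_hasDerivAt_eq_slope g' g'' hθ.2
      (fun t ht => (hg' t (hsub2 ht)).continuousAt.continuousWithinAt)
      (fun t ht => hg' t (hsub2 (Ioo_subset_Icc_self ht)))
    have hθ₂mem : θ₂ ∈ Icc (-δ) δ := hsub2 (Ioo_subset_Icc_self hθ₂)
    have h1 : g'' θ₂ < 0 := hneg θ₂ hθ₂mem
    rw [h0] at hθ₂eq
    have hθneg : θ < 0 := hθ.2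
    have e2 : 0 - g' θ = g'' θ₂ * (0 - θ) :=
      (div_eq_iff (by linarith : (0:ℝ) - θ ≠ 0)).1 hθ₂eq.symm
    have hgθ : 0 < g' θ := by nlinarith
    have e1 : g 0 - g s = g' θ * (0 - s) :=
      (div_eq_iff (by linarith : (0:ℝ) - s ≠ 0)).1 hθeq.symm
    nlinarith
  · -- 0 < s
    have hsub : Icc 0 s ⊆ Icc (-δ) δ := Icc_subset_Icc (by linarith) hs.2
    obtain ⟨θ, hθ, hθeq⟩ := exists_hasDerivAt_eq_slope g g' h
      (fun t ht => (hg t (hsub ht)).continuousAt.continuousWithinAt)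
      (fun t ht => hg t (hsub (Ioo_subset_Icc_self ht)))
    have hθmem : θ ∈ Icc (-δ) δ := hsub (Ioo_subset_Icc_self hθ)
    have hsub2 : Icc 0 θ ⊆ Icc (-δ) δ := Icc_subset_Icc (by linarith) hθmem.2
    obtain ⟨θ₂, hθ₂, hθ₂eq⟩ := exists_hasDerivAt_eq_slope g' g'' hθ.1
      (fun t ht => (hg' t (hsub2 ht)).continuousAt.continuousWithinAt)
      (fun t ht => hg' t (hsub2 (Ioo_subset_Icc_self ht)))
    have hθ₂mem : θ₂ ∈ Icc (-δ) δ := hsub2 (Ioo_subset_Icc_self hθ₂)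
    have h1 : g'' θ₂ < 0 := hneg θ₂ hθ₂mem
    rw [h0] at hθ₂eq
    have hθpos : 0 < θ := hθ.1
    have e2 : g' θ - 0 = g'' θ₂ * (θ - 0) :=
      (div_eq_iff (by linarith : θ - (0:ℝ) ≠ 0)).1 hθ₂eq.symm
    have hgθ : g' θ < 0 := by nlinarith
    have e1 : g s - g 0 = g' θ * (s - 0) :=
      (div_eq_iff (by linarith : s - (0:ℝ) ≠ 0)).1 hθeq.symm
    nlinarith

lemma key1d_min {g g' g'' : ℝ → ℝ} {δ : ℝ} (hδ : 0 < δ)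
    (hg : ∀ t ∈ Icc (-δ) δ, HasDerivAt g (g' t) t)
    (hg' : ∀ t ∈ Icc (-δ) δ, HasDerivAt g' (g'' t) t)
    (h0 : g' 0 = 0) (hpos : ∀ t ∈ Icc (-δ) δ, 0 < g'' t) :
    ∀ s ∈ Icc (-δ) δ, s ≠ 0 → g 0 < g s := by
  intro s hs hs0
  have := key1d_max (g := fun t => -g t) (g' := fun t => -g' t) (g'' := fun t => -g'' t) hδ
    (fun t ht => (hg t ht).neg) (fun t ht => (hg' t ht).neg)
    (by simp [h0]) (fun t ht => by simpa using hpos t ht) s hs hs0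
  simpa using this

lemma posdef_bound (B : (ℝ × ℝ) →L[ℝ] (ℝ × ℝ) →L[ℝ] ℝ) (h : ∀ v : ℝ × ℝ, v ≠ 0 → 0 < B v v) :
    ∃ c > 0, ∀ v : ℝ × ℝ, c * ‖v‖ ^ 2 ≤ B v v := by
  have hcont : Continuous fun v : ℝ × ℝ => B v v := by fun_prop
  obtain ⟨x, hx, hmin⟩ := (isCompact_sphere (0 : ℝ × ℝ) 1).exists_isMinOn
    ⟨(1, 0), by simp [Prod.norm_def]⟩ hcont.continuousOn
  rw [isMinOn_iff] at hmin
  have hxs : ‖x‖ = 1 := by simpa using hx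
  have hx0 : x ≠ 0 := by intro h'; simp [h'] at hxs
  refine ⟨B x x, h x hx0, fun v => ?_⟩
  rcases eq_or_ne v 0 with rfl | hv
  · simp
  · have hn : 0 < ‖v‖ := norm_pos_iff.mpr hv
    set u : ℝ × ℝ := ‖v‖⁻¹ • v with hu
    have hus : u ∈ Metric.sphere (0 : ℝ × ℝ) 1 := by
      simp [hu, norm_smul, abs_of_pos (inv_pos.mpr hn), inv_mul_cancel₀ hn.ne']
    have hvu : v = ‖v‖ • u := by
      rw [hu, smul_smul, mul_inv_cancel₀ hn.ne', one_smul]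
    have hBv : B v v = ‖v‖ ^ 2 * B u u := by
      conv_lhs => rw [hvu]
      simp only [map_smul, ContinuousLinearMap.smul_apply, smul_eq_mul]
      ring
    have := hmin u hus
    rw [hBv]
    nlinarith

lemma bilin_apply_bound (A B : (ℝ × ℝ) →L[ℝ] (ℝ × ℝ) →L[ℝ] ℝ) (v w : ℝ × ℝ) :
    |A v w - B v w| ≤ ‖A - B‖ * ‖v‖ * ‖w‖ := by
  have h1 : A v w - B v w = ((A - B) v) w := by
    simp [ContinuousLinearMap.sub_apply]
  rw [h1, ← Real.norm_eq_abs]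
  calc ‖((A - B) v) w‖ ≤ ‖(A - B) v‖ * ‖w‖ := ((A - B) v).le_opNorm w
    _ ≤ ‖A - B‖ * ‖v‖ * ‖w‖ := by
        have := (A - B).le_opNorm v
        have : ‖(A - B) v‖ * ‖w‖ ≤ ‖A - B‖ * ‖v‖ * ‖w‖ := by
          apply mul_le_mul_of_nonneg_right this (norm_nonneg w)
        linarith

set_option maxHeartbeats 1000000 in
/-- If `f` has continuous first and second order partial derivatives on an open
neighborhood `U ⊆ D` of the interior point `p` and `Δf(p) ≠ 0`, then `f` has a saddle point
at `p` if and only if `∇f(p) = 0` and `Δf(p) < 0`. -/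
theorem saddle_iff_critical_and_neg_discriminant (D U : Set (ℝ × ℝ)) (p : ℝ × ℝ)
    (f : ℝ × ℝ → ℝ) (hp : p ∈ interior D) (hU : IsOpen U) (hpU : p ∈ U) (hUD : U ⊆ D)
    (hf : ContDiffOn ℝ 2 f U) (hne : fxx f p * fyy f p - fxy f p ^ 2 ≠ 0) :
    HasSaddleAt D f p ↔
      fderiv ℝ f p = 0 ∧ fxx f p * fyy f p - fxy f p ^ 2 < 0 := by
  have hUnhds : U ∈ 𝓝 p := hU.mem_nhds hpU
  have hfd : ∀ q ∈ U, DifferentiableAt ℝ f q := fun q hq =>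
    (hf.contDiffAt (hU.mem_nhds hq)).differentiableAt (by norm_num)
  have hφcd : ContDiffOn ℝ 1 (fderiv ℝ f) U := hf.fderiv_of_isOpen hU (by norm_num)
  have hφd : ∀ q ∈ U, DifferentiableAt ℝ (fderiv ℝ f) q := fun q hq =>
    (hφcd.contDiffAt (hU.mem_nhds hq)).differentiableAt (by norm_num)
  have hHc : ContinuousOn (fun q => fderiv ℝ (fderiv ℝ f) q) U :=
    hφcd.continuousOn_fderiv_of_isOpen hU le_rfl
  have hsymm : ∀ v w : ℝ × ℝ, fderiv ℝ (fderiv ℝ f) p v w = fderiv ℝ (fderiv ℝ f) p w v :=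
    fun v w => second_derivative_symmetric_of_eventually
      (Filter.eventually_of_mem hUnhds fun y hy => (hfd y hy).hasFDerivAt)
      ((hφd p hpU).hasFDerivAt) v w
  have happ : ∀ u w : ℝ × ℝ, fderiv ℝ (fun q => fderiv ℝ f q u) p w
      = fderiv ℝ (fderiv ℝ f) p w u := by
    intro u w
    rw [fderiv_clm_apply (hφd p hpU) (differentiableAt_const u)]
    simp
  have hess_eq : ∀ h : ℝ × ℝ, fderiv ℝ (fderiv ℝ f) p h h = hessianForm f p h := by
    intro h
    have hxx : fxx f p = fderiv ℝ (fderiv ℝ f) p (1, 0) (1, 0) := happ (1, 0) (1, 0)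
    have hxy : fxy f p = fderiv ℝ (fderiv ℝ f) p (0, 1) (1, 0) := happ (1, 0) (0, 1)
    have hyy : fyy f p = fderiv ℝ (fderiv ℝ f) p (0, 1) (0, 1) := happ (0, 1) (0, 1)
    have hdecomp : h = h.1 • ((1 : ℝ), (0 : ℝ)) + h.2 • ((0 : ℝ), (1 : ℝ)) := by
      ext <;> simp
    rw [hessianForm, hxx, hxy, hyy]
    conv_lhs => rw [hdecomp]
    simp only [map_add, map_smul, ContinuousLinearMap.add_apply,
      ContinuousLinearMap.smul_apply, smul_eq_mul]
    rw [hsymm (1, 0) (0, 1)]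
    ring
  have hcurve : ∀ (v : ℝ × ℝ) (t : ℝ), HasDerivAt (fun s : ℝ => p + s • v) v t := by
    intro v t
    simpa using ((hasDerivAt_id t).smul_const v).const_add p
  have seg_max : ∀ (v : ℝ × ℝ) (δ : ℝ), 0 < δ → fderiv ℝ f p = 0 →
      (∀ t ∈ Icc (-δ) δ, p + t • v ∈ U) →
      (∀ t ∈ Icc (-δ) δ, fderiv ℝ (fderiv ℝ f) (p + t • v) v v < 0) →
      ∀ s ∈ Icc (-δ) δ, s ≠ 0 → f (p + s • v) < f p := by
    intro v δ hδ hgrad hmem hneg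
    have h1 : ∀ t ∈ Icc (-δ) δ,
        HasDerivAt (fun s => f (p + s • v)) (fderiv ℝ f (p + t • v) v) t := fun t ht =>
      (hfd _ (hmem t ht)).hasFDerivAt.comp_hasDerivAt t (hcurve v t)
    have h2 : ∀ t ∈ Icc (-δ) δ, HasDerivAt (fun s => fderiv ℝ f (p + s • v) v)
        (fderiv ℝ (fderiv ℝ f) (p + t • v) v v) t := by
      intro t ht
      have h3 : HasFDerivAt (fun q => fderiv ℝ f q v)
          ((fderiv ℝ (fderiv ℝ f) (p + t • v)).flip v) (p + t • v) := by
        simpa using (hφd _ (hmem t ht)).hasFDerivAt.clm_apply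
          (hasFDerivAt_const v (p + t • v))
      have h4 := h3.comp_hasDerivAt t (hcurve v t)
      simp only [ContinuousLinearMap.flip_apply] at h4
      exact h4
    have h0 : fderiv ℝ f (p + (0 : ℝ) • v) v = 0 := by simp [hgrad]
    have := key1d_max hδ h1 h2 h0 hneg
    intro s hs hs0
    have hres := this s hs hs0
    simpa using hres
  have seg_min : ∀ (v : ℝ × ℝ) (δ : ℝ), 0 < δ → fderiv ℝ f p = 0 →
      (∀ t ∈ Icc (-δ) δ, p + t • v ∈ U) →
      (∀ t ∈ Icc (-δ) δ, 0 < fderiv ℝ (fderiv ℝ f) (p + t • v) v v) →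
      ∀ s ∈ Icc (-δ) δ, s ≠ 0 → f p < f (p + s • v) := by
    intro v δ hδ hgrad hmem hpos
    have h1 : ∀ t ∈ Icc (-δ) δ,
        HasDerivAt (fun s => f (p + s • v)) (fderiv ℝ f (p + t • v) v) t := fun t ht =>
      (hfd _ (hmem t ht)).hasFDerivAt.comp_hasDerivAt t (hcurve v t)
    have h2 : ∀ t ∈ Icc (-δ) δ, HasDerivAt (fun s => fderiv ℝ f (p + s • v) v)
        (fderiv ℝ (fderiv ℝ f) (p + t • v) v v) t := by
      intro t ht
      have h3 : HasFDerivAt (fun q => fderiv ℝ f q v)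
          ((fderiv ℝ (fderiv ℝ f) (p + t • v)).flip v) (p + t • v) := by
        simpa using (hφd _ (hmem t ht)).hasFDerivAt.clm_apply
          (hasFDerivAt_const v (p + t • v))
      have h4 := h3.comp_hasDerivAt t (hcurve v t)
      simp only [ContinuousLinearMap.flip_apply] at h4
      exact h4
    have h0 : fderiv ℝ f (p + (0 : ℝ) • v) v = 0 := by simp [hgrad]
    have := key1d_min hδ h1 h2 h0 hpos
    intro s hs hs0
    have hres := this s hs hs0
    simpa using hres
  have hHp : ContinuousAt (fun q => fderiv ℝ (fderiv ℝ f) q) p := hHc.continuousAt hUnhds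
  have hevball : ∀ r : ℝ, 0 < r →
      ∀ᶠ q in 𝓝 p, ‖fderiv ℝ (fderiv ℝ f) q - fderiv ℝ (fderiv ℝ f) p‖ < r := by
    intro r hr
    have := hHp (Metric.ball_mem_nhds (α := (ℝ × ℝ) →L[ℝ] (ℝ × ℝ) →L[ℝ] ℝ) (fderiv ℝ (fderiv ℝ f) p) hr)
    filter_upwards [this] with q hq
    rw [← dist_eq_norm_sub (E := (ℝ × ℝ) →L[ℝ] (ℝ × ℝ) →L[ℝ] ℝ)]
    exact Metric.mem_ball.mp hq
  have hevneg : ∀ v : ℝ × ℝ, fderiv ℝ (fderiv ℝ f) p v v < 0 →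
      ∀ᶠ q in 𝓝 p, fderiv ℝ (fderiv ℝ f) q v v < 0 := by
    intro v hQ
    set r : ℝ := -(fderiv ℝ (fderiv ℝ f) p v v) / (2 * ‖v‖ ^ 2 + 1) with hr
    have hrpos : 0 < r := by
      apply div_pos (by linarith) (by positivity)
    filter_upwards [hevball r hrpos] with q hq
    have hb := bilin_apply_bound (fderiv ℝ (fderiv ℝ f) q) (fderiv ℝ (fderiv ℝ f) p) v v
    have habs := abs_le.mp hb
    have hv2 : (0:ℝ) ≤ ‖v‖ ^ 2 := by positivity
    have hrr : r * (2 * ‖v‖ ^ 2 + 1) = -(fderiv ℝ (fderiv ℝ f) p v v) := by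
      rw [hr]; field_simp
    nlinarith [mul_le_mul_of_nonneg_right (le_of_lt hq) hv2,
      mul_le_mul_of_nonneg_left (le_of_lt hq) (norm_nonneg v),
      mul_nonneg (norm_nonneg (fderiv ℝ (fderiv ℝ f) q - fderiv ℝ (fderiv ℝ f) p)) hv2]
  have hevpos : ∀ v : ℝ × ℝ, 0 < fderiv ℝ (fderiv ℝ f) p v v →
      ∀ᶠ q in 𝓝 p, 0 < fderiv ℝ (fderiv ℝ f) q v v := by
    intro v hQ
    set r : ℝ := fderiv ℝ (fderiv ℝ f) p v v / (2 * ‖v‖ ^ 2 + 1) with hr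
    have hrpos : 0 < r := by
      apply div_pos (by linarith) (by positivity)
    filter_upwards [hevball r hrpos] with q hq
    have hb := bilin_apply_bound (fderiv ℝ (fderiv ℝ f) q) (fderiv ℝ (fderiv ℝ f) p) v v
    have habs := abs_le.mp hb
    have hv2 : (0:ℝ) ≤ ‖v‖ ^ 2 := by positivity
    have hrr : r * (2 * ‖v‖ ^ 2 + 1) = fderiv ℝ (fderiv ℝ f) p v v := by
      rw [hr]; field_simp
    nlinarith [mul_le_mul_of_nonneg_right (le_of_lt hq) hv2,
      mul_le_mul_of_nonneg_left (le_of_lt hq) (norm_nonneg v),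
      mul_nonneg (norm_nonneg (fderiv ℝ (fderiv ℝ f) q - fderiv ℝ (fderiv ℝ f) p)) hv2]
  -- given an eventual property of the second derivative near p, find a δ for the segment
  have hfind : ∀ (v : ℝ × ℝ) (S : Set (ℝ × ℝ)), S ∈ 𝓝 p →
      ∃ δ : ℝ, 0 < δ ∧ ∀ t ∈ Icc (-δ) δ, p + t • v ∈ S ∩ U := by
    intro v S hS
    obtain ⟨ε, hε, hball⟩ := Metric.mem_nhds_iff.mp (inter_mem hS hUnhds)
    refine ⟨ε / (‖v‖ + 1), by positivity, fun t ht => hball ?_⟩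
    rw [Metric.mem_ball, dist_eq_norm, add_sub_cancel_left, norm_smul]
    have h1 : |t| ≤ ε / (‖v‖ + 1) := abs_le.mpr ⟨ht.1, ht.2⟩
    have h2 : ‖t‖ * ‖v‖ ≤ (ε / (‖v‖ + 1)) * ‖v‖ := by
      apply mul_le_mul_of_nonneg_right _ (norm_nonneg v)
      rwa [Real.norm_eq_abs]
    have h3 : (ε / (‖v‖ + 1)) * ‖v‖ < ε := by
      rw [div_mul_eq_mul_div, div_lt_iff₀ (by positivity)]
      nlinarith [norm_nonneg v]
    linarith
  -- homogeneity / independence helper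
  have hQsmul : ∀ (c : ℝ) (x : ℝ × ℝ), hessianForm f p (c • x) = c ^ 2 * hessianForm f p x := by
    intro c x
    simp only [hessianForm, Prod.smul_fst, Prod.smul_snd, smul_eq_mul]
    ring
  have hindep : ∀ (x y : ℝ × ℝ), hessianForm f p x < 0 → 0 < hessianForm f p y →
      (∀ c : ℝ, x ≠ c • y) ∧ (∀ c : ℝ, y ≠ c • x) := by
    intro x y hx hy
    constructor
    · intro c hxy
      rw [hxy, hQsmul] at hx
      nlinarith [sq_nonneg c]
    · intro c hyx
      rw [hyx, hQsmul] at hy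
      nlinarith [sq_nonneg c]
  constructor
  · rintro ⟨a₁, b₁, a₂, b₂, t₁, t₂, γ₁, γ₂, hr₁, hr₂, ht₁, ht₂, hp₁, hp₂, hc₁, hc₂, hmax, hmin⟩
    have hγ₁ := hr₁.2.2.2 t₁ ht₁
    have hγ₂ := hr₂.2.2.2 t₂ ht₂
    set u := deriv γ₁ t₁ with hu_def
    set w := deriv γ₂ t₂ with hw_def
    have hu0 : u ≠ 0 := hγ₁.2
    have hw0 : w ≠ 0 := hγ₂.2
    have hfp' : HasFDerivAt f (fderiv ℝ f p) (γ₁ t₁) := hp₁ ▸ (hfd p hpU).hasFDerivAt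
    have hu : fderiv ℝ f p u = 0 :=
      hmax.hasDerivAt_eq_zero (hfp'.comp_hasDerivAt t₁ hγ₁.1.hasDerivAt)
    have hfp'' : HasFDerivAt f (fderiv ℝ f p) (γ₂ t₂) := hp₂ ▸ (hfd p hpU).hasFDerivAt
    have hw : fderiv ℝ f p w = 0 :=
      hmin.hasDerivAt_eq_zero (hfp''.comp_hasDerivAt t₂ hγ₂.1.hasDerivAt)
    have hdet : u.1 * w.2 - u.2 * w.1 ≠ 0 := by
      intro hd0
      rcases eq_or_ne w.1 0 with h1 | h1
      · have hw2 : w.2 ≠ 0 := by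
          intro h2
          exact hw0 (by rw [Prod.ext_iff]; exact ⟨by simpa using h1, by simpa using h2⟩)
        apply hc₁ (u.2 / w.2)
        have hu1 : u.1 = 0 := by
          have : u.1 * w.2 = 0 := by rw [h1] at hd0; linarith
          exact (mul_eq_zero.mp this).resolve_right hw2
        rw [Prod.ext_iff]
        constructor
        · rw [Prod.smul_fst, smul_eq_mul, h1, hu1]; ring
        · rw [Prod.smul_snd, smul_eq_mul]; field_simp
      · apply hc₁ (u.1 / w.1)
        rw [Prod.ext_iff]
        constructor
        · rw [Prod.smul_fst, smul_eq_mul]; field_simp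
        · rw [Prod.smul_snd, smul_eq_mul]; field_simp; linarith
    have hgrad : fderiv ℝ f p = 0 := by
      apply ContinuousLinearMap.ext
      intro x
      have hx : x = ((x.1 * w.2 - x.2 * w.1) / (u.1 * w.2 - u.2 * w.1)) • u
          + ((u.1 * x.2 - u.2 * x.1) / (u.1 * w.2 - u.2 * w.1)) • w := by
        rw [Prod.ext_iff]
        constructor <;>
          · simp only [Prod.fst_add, Prod.snd_add, Prod.smul_fst, Prod.smul_snd, smul_eq_mul]
            field_simp [show w.2 * u.1 - w.1 * u.2 ≠ 0 by intro h; apply hdet; linarith]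
            ring
      rw [hx, map_add, map_smul, map_smul, hu, hw]
      simp
    refine ⟨hgrad, ?_⟩
    rcases lt_trichotomy (fxx f p * fyy f p - fxy f p ^ 2) 0 with h | h | h
    · exact h
    · exact absurd h hne
    exfalso
    have no_strict_min : ¬ ∃ ε : ℝ, 0 < ε ∧ ∀ x, dist x p < ε → x ≠ p → f p < f x := by
      rintro ⟨ε, hε, hstrict⟩
      have hcont : Tendsto γ₁ (𝓝 t₁) (𝓝 p) := hp₁ ▸ hγ₁.1.continuousAt
      have hev1 : ∀ᶠ s in 𝓝 t₁, dist (γ₁ s) p < ε := by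
        filter_upwards [hcont (Metric.ball_mem_nhds p hε)] with s hs
        exact Metric.mem_ball.mp hs
      have hev2 : ∀ᶠ s in 𝓝 t₁, s ≠ t₁ → γ₁ s ≠ p := by
        have hlo := hasDerivAt_iff_isLittleO.mp hγ₁.1.hasDerivAt
        have hupos : 0 < ‖u‖ := norm_pos_iff.mpr hu0
        filter_upwards [hlo.def (half_pos hupos)] with s hs hsne hcontra
        rw [hcontra, hp₁] at hs
        have hsb : |s - t₁| * ‖u‖ ≤ ‖u‖ / 2 * |s - t₁| := by
          simpa [norm_smul, Real.norm_eq_abs] using hs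
        have h1 : 0 < |s - t₁| := abs_pos.mpr (sub_ne_zero.mpr hsne)
        nlinarith
      have hevne : ∀ᶠ s in 𝓝[≠] t₁, s ≠ t₁ := by
        filter_upwards [self_mem_nhdsWithin] with s hs using hs
      obtain ⟨s, hs⟩ := ((((hev1.and hev2).and hmax).filter_mono
        nhdsWithin_le_nhds).and hevne).exists
      have hsne : s ≠ t₁ := hs.2
      have hlt := hstrict (γ₁ s) hs.1.1.1 (hs.1.1.2 hsne)
      have hle : (f ∘ γ₁) s ≤ (f ∘ γ₁) t₁ := hs.1.2
      rw [Function.comp_apply, Function.comp_apply, hp₁] at hle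
      linarith
    have no_strict_max : ¬ ∃ ε : ℝ, 0 < ε ∧ ∀ x, dist x p < ε → x ≠ p → f x < f p := by
      rintro ⟨ε, hε, hstrict⟩
      have hcont : Tendsto γ₂ (𝓝 t₂) (𝓝 p) := hp₂ ▸ hγ₂.1.continuousAt
      have hev1 : ∀ᶠ s in 𝓝 t₂, dist (γ₂ s) p < ε := by
        filter_upwards [hcont (Metric.ball_mem_nhds p hε)] with s hs
        exact Metric.mem_ball.mp hs
      have hev2 : ∀ᶠ s in 𝓝 t₂, s ≠ t₂ → γ₂ s ≠ p := by
        have hlo := hasDerivAt_iff_isLittleO.mp hγ₂.1.hasDerivAt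
        have hupos : 0 < ‖w‖ := norm_pos_iff.mpr hw0
        filter_upwards [hlo.def (half_pos hupos)] with s hs hsne hcontra
        rw [hcontra, hp₂] at hs
        have hsb : |s - t₂| * ‖w‖ ≤ ‖w‖ / 2 * |s - t₂| := by
          simpa [norm_smul, Real.norm_eq_abs] using hs
        have h1 : 0 < |s - t₂| := abs_pos.mpr (sub_ne_zero.mpr hsne)
        nlinarith
      have hevne : ∀ᶠ s in 𝓝[≠] t₂, s ≠ t₂ := by
        filter_upwards [self_mem_nhdsWithin] with s hs using hs
      obtain ⟨s, hs⟩ := ((((hev1.and hev2).and hmin).filter_mono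
        nhdsWithin_le_nhds).and hevne).exists
      have hsne : s ≠ t₂ := hs.2
      have hlt := hstrict (γ₂ s) hs.1.1.1 (hs.1.1.2 hsne)
      have hle : (f ∘ γ₂) t₂ ≤ (f ∘ γ₂) s := hs.1.2
      rw [Function.comp_apply, Function.comp_apply, hp₂] at hle
      linarith
    have hfxx0 : fxx f p ≠ 0 := by
      intro h0
      rw [h0] at h
      nlinarith [sq_nonneg (fxy f p)]
    have hx_cases : ∀ hv : ℝ × ℝ, hv ≠ 0 → hv.1 ≠ 0 ∨ hv.2 ≠ 0 := by
      intro hv hv0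
      by_contra hcon
      push_neg at hcon
      exact hv0 (by rw [Prod.ext_iff]; exact ⟨by simpa using hcon.1, by simpa using hcon.2⟩)
    rcases hfxx0.lt_or_gt with hA' | hA'
    · -- fxx < 0 : negative definite, strict local max, contradict local min along γ₂
      have hQpos : ∀ hv : ℝ × ℝ, hv ≠ 0 → 0 < (-(fderiv ℝ (fderiv ℝ f) p)) hv hv := by
        intro hv hv0
        simp only [ContinuousLinearMap.neg_apply]
        rw [hess_eq, hessianForm]
        rcases eq_or_ne hv.2 0 with h2 | h2
        · have h1 : hv.1 ≠ 0 := (hx_cases hv hv0).resolve_right (by simp [h2])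
          have h1sq : 0 < hv.1 ^ 2 := by positivity
          rw [h2]
          nlinarith
        · have h2sq : 0 < hv.2 ^ 2 := by positivity
          nlinarith [sq_nonneg (fxx f p * hv.1 + fxy f p * hv.2), mul_pos h h2sq]
      obtain ⟨c, hc, hbound⟩ := posdef_bound _ hQpos
      obtain ⟨ε, hε, hball⟩ := Metric.mem_nhds_iff.mp
        (inter_mem (hevball (c / 2) (half_pos hc)) hUnhds)
      have hqneg : ∀ q ∈ Metric.ball p ε, ∀ hv : ℝ × ℝ,
          fderiv ℝ (fderiv ℝ f) q hv hv ≤ -(c / 2) * ‖hv‖ ^ 2 := by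
        intro q hq hv
        have h1 := hbound hv
        rw [ContinuousLinearMap.neg_apply, ContinuousLinearMap.neg_apply] at h1
        have h2 := (hball hq).1
        have hb := abs_le.mp (bilin_apply_bound (fderiv ℝ (fderiv ℝ f) q)
          (fderiv ℝ (fderiv ℝ f) p) hv hv)
        nlinarith [mul_le_mul_of_nonneg_right h2.le
          (mul_nonneg (norm_nonneg hv) (norm_nonneg hv)), sq_nonneg ‖hv‖,
          norm_nonneg hv]
      apply no_strict_max
      refine ⟨ε, hε, ?_⟩
      intro x hx hxp
      have hv0 : x - p ≠ 0 := sub_ne_zero.mpr hxp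
      have hmem : ∀ t ∈ Icc (-(1:ℝ)) 1, p + t • (x - p) ∈ Metric.ball p ε := by
        intro t ht
        rw [Metric.mem_ball, dist_eq_norm, add_sub_cancel_left, norm_smul]
        have h1 : |t| ≤ 1 := abs_le.mpr ⟨ht.1, ht.2⟩
        have h2 : ‖x - p‖ < ε := by rwa [← dist_eq_norm]
        have h3 := norm_nonneg (x - p)
        calc ‖t‖ * ‖x - p‖ ≤ 1 * ‖x - p‖ :=
              mul_le_mul_of_nonneg_right (by rwa [Real.norm_eq_abs]) h3
          _ = ‖x - p‖ := one_mul _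
          _ < ε := h2
      have hnegseg : ∀ t ∈ Icc (-(1:ℝ)) 1,
          fderiv ℝ (fderiv ℝ f) (p + t • (x - p)) (x - p) (x - p) < 0 := by
        intro t ht
        have h1 := hqneg _ (hmem t ht) (x - p)
        have hn : 0 < ‖x - p‖ := norm_pos_iff.mpr hv0
        nlinarith [mul_pos (half_pos hc) (pow_pos hn 2)]
      have := seg_max (x - p) 1 one_pos hgrad
        (fun t ht => (hball (hmem t ht)).2) hnegseg 1 (by norm_num) one_ne_zero
      simpa using this
    · -- fxx > 0 : positive definite, strict local min, contradict local max along γ₁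
      have hQpos : ∀ hv : ℝ × ℝ, hv ≠ 0 → 0 < fderiv ℝ (fderiv ℝ f) p hv hv := by
        intro hv hv0
        rw [hess_eq, hessianForm]
        rcases eq_or_ne hv.2 0 with h2 | h2
        · have h1 : hv.1 ≠ 0 := (hx_cases hv hv0).resolve_right (by simp [h2])
          have h1sq : 0 < hv.1 ^ 2 := by positivity
          rw [h2]
          nlinarith
        · have h2sq : 0 < hv.2 ^ 2 := by positivity
          nlinarith [sq_nonneg (fxx f p * hv.1 + fxy f p * hv.2), mul_pos h h2sq]
      obtain ⟨c, hc, hbound⟩ := posdef_bound _ hQpos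
      obtain ⟨ε, hε, hball⟩ := Metric.mem_nhds_iff.mp
        (inter_mem (hevball (c / 2) (half_pos hc)) hUnhds)
      have hqpos : ∀ q ∈ Metric.ball p ε, ∀ hv : ℝ × ℝ,
          c / 2 * ‖hv‖ ^ 2 ≤ fderiv ℝ (fderiv ℝ f) q hv hv := by
        intro q hq hv
        have h1 := hbound hv
        have h2 := (hball hq).1
        have hb := abs_le.mp (bilin_apply_bound (fderiv ℝ (fderiv ℝ f) q)
          (fderiv ℝ (fderiv ℝ f) p) hv hv)
        nlinarith [mul_le_mul_of_nonneg_right h2.le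
          (mul_nonneg (norm_nonneg hv) (norm_nonneg hv)), sq_nonneg ‖hv‖,
          norm_nonneg hv]
      apply no_strict_min
      refine ⟨ε, hε, ?_⟩
      intro x hx hxp
      have hv0 : x - p ≠ 0 := sub_ne_zero.mpr hxp
      have hmem : ∀ t ∈ Icc (-(1:ℝ)) 1, p + t • (x - p) ∈ Metric.ball p ε := by
        intro t ht
        rw [Metric.mem_ball, dist_eq_norm, add_sub_cancel_left, norm_smul]
        have h1 : |t| ≤ 1 := abs_le.mpr ⟨ht.1, ht.2⟩
        have h2 : ‖x - p‖ < ε := by rwa [← dist_eq_norm]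
        have h3 := norm_nonneg (x - p)
        calc ‖t‖ * ‖x - p‖ ≤ 1 * ‖x - p‖ :=
              mul_le_mul_of_nonneg_right (by rwa [Real.norm_eq_abs]) h3
          _ = ‖x - p‖ := one_mul _
          _ < ε := h2
      have hposseg : ∀ t ∈ Icc (-(1:ℝ)) 1,
          0 < fderiv ℝ (fderiv ℝ f) (p + t • (x - p)) (x - p) (x - p) := by
        intro t ht
        have h1 := hqpos _ (hmem t ht) (x - p)
        have hn : 0 < ‖x - p‖ := norm_pos_iff.mpr hv0
        nlinarith [mul_pos (half_pos hc) (pow_pos hn 2)]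
      have := seg_min (x - p) 1 one_pos hgrad
        (fun t ht => (hball (hmem t ht)).2) hposseg 1 (by norm_num) one_ne_zero
      simpa using this
  · rintro ⟨hgrad, hdisc⟩
    -- find directions with negative and positive Hessian form
    have hex : ∃ v₁ v₂ : ℝ × ℝ, hessianForm f p v₁ < 0 ∧ 0 < hessianForm f p v₂ := by
      rcases eq_or_ne (fxx f p) 0 with hA | hA
      · rcases eq_or_ne (fyy f p) 0 with hC | hC
        · have hB : fxy f p ≠ 0 := by
            intro h0; rw [hA, hC, h0] at hdisc; norm_num at hdisc
          rcases hB.lt_or_gt with hB' | hB'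
          · refine ⟨(1, 1), (1, -1), ?_, ?_⟩ <;>
              · simp [hessianForm, hA, hC]; nlinarith
          · refine ⟨(1, -1), (1, 1), ?_, ?_⟩ <;>
              · simp [hessianForm, hA, hC]; nlinarith
        · have hB : fxy f p ≠ 0 := by
            intro h0; rw [hA, h0] at hdisc; norm_num at hdisc
          have hQb : hessianForm f p (1, -(fxy f p) / fyy f p)
              = -(fxy f p) ^ 2 / fyy f p := by
            simp only [hessianForm, hA]
            field_simp
            ring
          rcases hC.lt_or_gt with hC' | hC'
          · refine ⟨(0, 1), (1, -(fxy f p) / fyy f p), ?_, ?_⟩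
            · simp [hessianForm, hA]; nlinarith
            · rw [hQb]
              apply div_pos_of_neg_of_neg (by nlinarith [sq_nonneg (fxy f p)]) hC'
          · refine ⟨(1, -(fxy f p) / fyy f p), (0, 1), ?_, ?_⟩
            · rw [hQb]
              apply div_neg_of_neg_of_pos (by nlinarith [sq_nonneg (fxy f p)]) hC'
            · simp [hessianForm, hA]; nlinarith
      · have hQb : hessianForm f p (-(fxy f p) / fxx f p, 1)
            = (fxx f p * fyy f p - fxy f p ^ 2) / fxx f p := by
          simp only [hessianForm]
          field_simp
          ring
        rcases hA.lt_or_gt with hA' | hA'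
        · refine ⟨(1, 0), (-(fxy f p) / fxx f p, 1), ?_, ?_⟩
          · simp [hessianForm]; nlinarith
          · rw [hQb]
            exact div_pos_of_neg_of_neg hdisc hA'
        · refine ⟨(-(fxy f p) / fxx f p, 1), (1, 0), ?_, ?_⟩
          · rw [hQb]
            exact div_neg_of_neg_of_pos hdisc hA'
          · simp [hessianForm]; nlinarith
    obtain ⟨v₁, v₂, hv₁, hv₂⟩ := hex
    have hv₁0 : v₁ ≠ 0 := by
      intro h0; rw [h0] at hv₁; simp [hessianForm] at hv₁
    have hv₂0 : v₂ ≠ 0 := by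
      intro h0; rw [h0] at hv₂; simp [hessianForm] at hv₂
    obtain ⟨δ₁, hδ₁, hmem₁⟩ := hfind v₁ _ (hevneg v₁ (by rw [hess_eq]; exact hv₁))
    obtain ⟨δ₂, hδ₂, hmem₂⟩ := hfind v₂ _ (hevpos v₂ (by rw [hess_eq]; exact hv₂))
    have hlt₁ : ∀ s ∈ Icc (-δ₁) δ₁, s ≠ 0 → f (p + s • v₁) < f p :=
      seg_max v₁ δ₁ hδ₁ hgrad (fun t ht => (hmem₁ t ht).2) (fun t ht => (hmem₁ t ht).1)
    have hlt₂ : ∀ s ∈ Icc (-δ₂) δ₂, s ≠ 0 → f p < f (p + s • v₂) :=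
      seg_min v₂ δ₂ hδ₂ hgrad (fun t ht => (hmem₂ t ht).2) (fun t ht => (hmem₂ t ht).1)
    have hd1 : deriv (fun t : ℝ => p + t • v₁) 0 = v₁ := (hcurve v₁ 0).deriv
    have hd2 : deriv (fun t : ℝ => p + t • v₂) 0 = v₂ := (hcurve v₂ 0).deriv
    have hreg : ∀ (v : ℝ × ℝ) (δ : ℝ), 0 < δ → v ≠ 0 →
        (∀ t ∈ Icc (-δ) δ, p + t • v ∈ U) →
        IsRegularPath D (fun t : ℝ => p + t • v) (-δ) δ := by
      intro v δ hδ hv0 hmem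
      refine ⟨by linarith, ?_, ?_, ?_⟩
      · exact (continuous_const.add (continuous_id.smul continuous_const)).continuousOn
      · exact fun t ht => hUD (hmem t ht)
      · intro t _
        exact ⟨(hcurve v t).differentiableAt, by rw [(hcurve v t).deriv]; exact hv0⟩
    refine ⟨-δ₁, δ₁, -δ₂, δ₂, 0, 0, fun t => p + t • v₁, fun t => p + t • v₂,
      hreg v₁ δ₁ hδ₁ hv₁0 (fun t ht => (hmem₁ t ht).2),
      hreg v₂ δ₂ hδ₂ hv₂0 (fun t ht => (hmem₂ t ht).2),
      by constructor <;> linarith, by constructor <;> linarith, by simp, by simp,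
      ?_, ?_, ?_, ?_⟩
    · rw [hd1, hd2]; exact (hindep v₁ v₂ hv₁ hv₂).1
    · rw [hd1, hd2]; exact (hindep v₁ v₂ hv₁ hv₂).2
    · filter_upwards [Ioo_mem_nhds (by linarith : -δ₁ < (0:ℝ)) hδ₁] with s hs
      rcases eq_or_ne s 0 with rfl | hs0
      · exact le_rfl
      · have := hlt₁ s (Ioo_subset_Icc_self hs) hs0
        simpa [Function.comp] using this.le
    · filter_upwards [Ioo_mem_nhds (by linarith : -δ₂ < (0:ℝ)) hδ₂] with s hs
      rcases eq_or_ne s 0 with rfl | hs0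
      · exact le_rfl
      · have := hlt₂ s (Ioo_subset_Icc_self hs) hs0
        simpa [Function.comp] using this.le
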